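/- Let S be a finite set of binary strings with Σ_{p∈S} 2^(−|p|) = Ω ≤ 1, and suppose |S| ≤ Ω·N for a real N ≥ 1. Then Σ_{p∈S} |p| · 2^(−|p|) ≤ Ω·log₂(N). -/

import Mathlib

lemma key_pointwise (n : ℕ) (N : ℝ) (hN : 1 ≤ N) :
    (n : ℝ) * (2 : ℝ) ^ (-(n : ℝ)) ≤
      (2 : ℝ) ^ (-(n : ℝ)) * Real.logb 2 N +
        (1 / N - (2 : ℝ) ^ (-(n : ℝ))) / Real.log 2 := by
  set x : ℝ := (2 : ℝ) ^ (-(n : ℝ)) with hxdef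
  have hx : 0 < x := Real.rpow_pos_of_pos (by norm_num) _
  have hN0 : 0 < N := lt_of_lt_of_le one_pos hN
  have ht : 0 < 1 / (x * N) := by positivity
  have h := Real.log_le_sub_one_of_pos ht
  have hlog2 : 0 < Real.log 2 := Real.log_pos (by norm_num)
  have hlogx : Real.log x = -(n : ℝ) * Real.log 2 := by
    rw [hxdef, Real.log_rpow (by norm_num)]
  have hlt : Real.log (1 / (x * N)) = -Real.log x - Real.log N := by
    rw [one_div, Real.log_inv, Real.log_mul (ne_of_gt hx) (ne_of_gt hN0)]; ring
  rw [hlt] at h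
  -- multiply h by x > 0
  have h2 : x * (-Real.log x - Real.log N) ≤ 1 / N - x := by
    have := mul_le_mul_of_nonneg_left h (le_of_lt hx)
    calc x * (-Real.log x - Real.log N) ≤ x * (1 / (x * N) - 1) := this
      _ = 1 / N - x := by field_simp
  -- divide by log 2
  have h3 : x * (-Real.log x - Real.log N) / Real.log 2 ≤ (1 / N - x) / Real.log 2 :=
    div_le_div_of_nonneg_right h2 hlog2.le
  have hlogb : Real.logb 2 N = Real.log N / Real.log 2 := rfl
  have hxn : x * (-Real.log x - Real.log N) / Real.log 2
      = (n : ℝ) * x - x * Real.logb 2 N := by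
    rw [hlogx, hlogb]; field_simp
  rw [hxn] at h3
  linarith

/-- Lemma 4 of the paper: weighted average program length over the halting set
is at most Ω·log₂ N. -/
theorem stmt_6 (S : Finset (List Bool)) (Ω : ℝ)
    (hΩ : Ω = ∑ p ∈ S, (2 : ℝ) ^ (-(p.length : ℝ))) (hΩ1 : Ω ≤ 1)
    (N : ℝ) (hN : 1 ≤ N) (hcard : (S.card : ℝ) ≤ Ω * N) :
    ∑ p ∈ S, (p.length : ℝ) * (2 : ℝ) ^ (-(p.length : ℝ)) ≤ Ω * Real.logb 2 N := by
  have hN0 : 0 < N := lt_of_lt_of_le one_pos hN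
  have hlog2 : 0 < Real.log 2 := Real.log_pos (by norm_num)
  have hsum : ∑ p ∈ S, (p.length : ℝ) * (2 : ℝ) ^ (-(p.length : ℝ)) ≤
      ∑ p ∈ S, ((2 : ℝ) ^ (-(p.length : ℝ)) * Real.logb 2 N +
        (1 / N - (2 : ℝ) ^ (-(p.length : ℝ))) / Real.log 2) :=
    Finset.sum_le_sum fun p _ => key_pointwise p.length N hN
  have hrhs : ∑ p ∈ S, ((2 : ℝ) ^ (-(p.length : ℝ)) * Real.logb 2 N +
        (1 / N - (2 : ℝ) ^ (-(p.length : ℝ))) / Real.log 2)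
      = Ω * Real.logb 2 N + ((S.card : ℝ) / N - Ω) / Real.log 2 := by
    rw [Finset.sum_add_distrib, ← Finset.sum_mul, ← hΩ, ← Finset.sum_div,
      Finset.sum_sub_distrib, ← hΩ, Finset.sum_const, nsmul_eq_mul, mul_one_div]
  have hcard' : (S.card : ℝ) / N - Ω ≤ 0 := by
    rw [sub_nonpos, div_le_iff₀ hN0]; exact hcard
  have : ((S.card : ℝ) / N - Ω) / Real.log 2 ≤ 0 :=
    div_nonpos_of_nonpos_of_nonneg hcard' (le_of_lt hlog2)
  linarith [hsum, hrhs ▸ hsum]
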